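/- Let d ≥ 2 and m ≥ 1 be integers with (d−1) dividing (m+1), and suppose there is a prime p dividing d that does not divide m. Then for every integer n ≥ 1 with m ≤ d^{n+1} − 3, the coefficient B(d,m,n) is nonzero. -/

import Mathlib

/-- Generalized binomial coefficient `C_j(x) = x(x-1)⋯(x-j+1)/j!`, with `C_0(x) = 1`. -/
noncomputable def genBinom (x : ℚ) (j : ℕ) : ℚ :=
  (∏ i ∈ Finset.range j, (x - (i : ℚ))) / (Nat.factorial j : ℚ)

/-- The Ewing–Schober combinatorial formula `B(d,m,n)`: the sum is over all tuples
`(j_1,…,j_n)` of nonnegative integers (here `j : Fin n → ℕ`, 0-indexed, so `j k`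
corresponds to `j_{k+1}`) satisfying `Σ_{k=1}^n (d^{n-k+1} - 1) j_k = m + 1`, of
`Π_{k=1}^n C_{j_k}(m/d^{n-k+1} - Σ_{l=1}^{k-1} d^{k-l} j_l)`, multiplied by `-(1/m)`. -/
noncomputable def multibrotB (d m n : ℕ) : ℚ :=
  -(1 / (m : ℚ)) * ∑ᶠ j : Fin n → ℕ,
    if (∑ k : Fin n, (d ^ (n - k.val) - 1) * j k) = m + 1 then
      ∏ k : Fin n,
        genBinom ((m : ℚ) / (d : ℚ) ^ (n - k.val)
          - ∑ l ∈ Finset.univ.filter (fun l : Fin n => l < k),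
              (d : ℚ) ^ (k.val - l.val) * ((j l : ℕ) : ℚ)) (j k)
    else 0

section Aux
variable {p : ℕ} [hp : Fact p.Prime]

lemma padicValRat_finset_prod {ι : Type*} (s : Finset ι) (f : ι → ℚ)
    (hf : ∀ i ∈ s, f i ≠ 0) :
    padicValRat p (∏ i ∈ s, f i) = ∑ i ∈ s, padicValRat p (f i) := by
  induction s using Finset.cons_induction with
  | empty => simp
  | cons i s his ih =>
    rw [Finset.prod_cons, Finset.sum_cons,
      padicValRat.mul (hf i (Finset.mem_cons_self _ _))
        (Finset.prod_ne_zero_iff.mpr fun j hj => hf j (Finset.mem_cons_of_mem hj)),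
      ih fun j hj => hf j (Finset.mem_cons_of_mem hj)]

lemma padicValRat_sub_nat {x : ℚ} (hx : padicValRat p x < 0) (c : ℕ) :
    x - (c : ℚ) ≠ 0 ∧ padicValRat p (x - (c : ℚ)) = padicValRat p x := by
  have hx0 : x ≠ 0 := by rintro rfl; simp at hx
  rcases Nat.eq_zero_or_pos c with rfl | hc
  · simpa using hx0
  have hc0 : ((c : ℚ)) ≠ 0 := Nat.cast_ne_zero.mpr hc.ne'
  have hvc : padicValRat p x < padicValRat p (-(c : ℚ)) := by
    rw [padicValRat.neg, padicValRat.of_nat]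
    exact hx.trans_le (Int.ofNat_nonneg _)
  have hne : x + -(c : ℚ) ≠ 0 := by
    intro h
    have hxc : x = (c : ℚ) := by linarith [h]
    rw [hxc, padicValRat.of_nat] at hx
    exact absurd hx (not_lt.mpr (Int.ofNat_nonneg _))
  refine ⟨by rwa [sub_eq_add_neg], ?_⟩
  rw [sub_eq_add_neg, padicValRat.add_eq_of_lt hne hx0 (neg_ne_zero.mpr hc0) hvc]

lemma genBinom_ne_zero_and_val {x : ℚ} (hx : padicValRat p x < 0) (j : ℕ) :
    genBinom x j ≠ 0 ∧
      padicValRat p (genBinom x j)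
        = (j : ℤ) * padicValRat p x - (padicValNat p (Nat.factorial j) : ℤ) := by
  have hfac : ((Nat.factorial j : ℚ)) ≠ 0 := Nat.cast_ne_zero.mpr (Nat.factorial_ne_zero j)
  have hprod : ∀ i ∈ Finset.range j, (x - (i : ℚ)) ≠ 0 := fun i _ => (padicValRat_sub_nat hx i).1
  have h1 : (∏ i ∈ Finset.range j, (x - (i : ℚ))) ≠ 0 := Finset.prod_ne_zero_iff.mpr hprod
  refine ⟨div_ne_zero h1 hfac, ?_⟩
  rw [genBinom, padicValRat.div h1 hfac, padicValRat_finset_prod _ _ hprod,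
    Finset.sum_congr rfl fun i hi => (padicValRat_sub_nat hx i).2, Finset.sum_const,
    Finset.card_range, nsmul_eq_mul, padicValRat.of_nat]

lemma sum_val_zero_or_lt {ι : Type*} (s : Finset ι) (f : ι → ℚ) (c : ℤ)
    (h : ∀ i ∈ s, f i = 0 ∨ (f i ≠ 0 ∧ c < padicValRat p (f i))) :
    (∑ i ∈ s, f i = 0) ∨ (∑ i ∈ s, f i ≠ 0 ∧ c < padicValRat p (∑ i ∈ s, f i)) := by
  induction s using Finset.cons_induction with
  | empty => left; simp
  | cons i s his ih =>
    rw [Finset.sum_cons]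
    rcases ih (fun j hj => h j (Finset.mem_cons_of_mem hj)) with h0 | ⟨hs0, hcs⟩
    · rw [h0, add_zero]
      rcases h i (Finset.mem_cons_self _ _) with h1 | ⟨h1, h2⟩
      · left; exact h1
      · right; exact ⟨h1, h2⟩
    · rcases h i (Finset.mem_cons_self _ _) with h1 | ⟨h1, h2⟩
      · rw [h1, zero_add]; right; exact ⟨hs0, hcs⟩
      · by_cases hz : f i + ∑ j ∈ s, f j = 0
        · left; exact hz
        · right
          exact ⟨hz, lt_of_lt_of_le (lt_min h2 hcs) (padicValRat.min_le_padicValRat_add hz)⟩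

lemma sum_ne_zero_of_min {ι : Type*} [DecidableEq ι] (s : Finset ι) (f : ι → ℚ) (i₀ : ι)
    (hi₀ : i₀ ∈ s) (h0 : f i₀ ≠ 0)
    (h : ∀ i ∈ s, i ≠ i₀ →
      f i = 0 ∨ (f i ≠ 0 ∧ padicValRat p (f i₀) < padicValRat p (f i))) :
    ∑ i ∈ s, f i ≠ 0 := by
  rw [← Finset.add_sum_erase s f hi₀]
  rcases sum_val_zero_or_lt (s.erase i₀) f (padicValRat p (f i₀))
      (fun i hi => h i (Finset.mem_of_mem_erase hi) (Finset.ne_of_mem_erase hi)) with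
    h0' | ⟨hs0, hcs⟩
  · rw [h0', add_zero]; exact h0
  · intro hz
    have hneg : ∑ i ∈ s.erase i₀, f i = -f i₀ := by linarith [hz]
    rw [hneg, padicValRat.neg] at hcs
    exact lt_irrefl _ hcs

lemma padicValNat_le_of_dvd {a b : ℕ} (h : a ∣ b) (hb : b ≠ 0) :
    padicValNat p a ≤ padicValNat p b :=
  (padicValNat_dvd_iff_le hb).mp (dvd_trans pow_padicValNat_dvd h)

lemma padicValNat_finset_prod {ι : Type*} (s : Finset ι) (f : ι → ℕ)
    (hf : ∀ i ∈ s, f i ≠ 0) :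
    padicValNat p (∏ i ∈ s, f i) = ∑ i ∈ s, padicValNat p (f i) := by
  induction s using Finset.cons_induction with
  | empty => simp
  | cons i s his ih =>
    rw [Finset.prod_cons, Finset.sum_cons,
      padicValNat.mul (hf i (Finset.mem_cons_self _ _))
        (Finset.prod_ne_zero_iff.mpr fun j hj => hf j (Finset.mem_cons_of_mem hj)),
      ih fun j hj => hf j (Finset.mem_cons_of_mem hj)]

end Aux

lemma pow_ge_linear {d : ℕ} (hd : 1 ≤ d) : ∀ e : ℕ, (d - 1) * e + 1 ≤ d ^ e := by
  obtain ⟨c, rfl⟩ : ∃ c, d = c + 1 := ⟨d - 1, by omega⟩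
  intro e
  simp only [Nat.add_sub_cancel]
  induction e with
  | zero => simp
  | succ e ih =>
    have h2 : (c + 1) ^ (e + 1) = (c + 1) * (c + 1) ^ e := by ring
    rw [h2]
    calc c * (e + 1) + 1 ≤ (c + 1) * (c * e + 1) := by nlinarith [Nat.zero_le (c * c * e)]
      _ ≤ (c + 1) * (c + 1) ^ e := Nat.mul_le_mul_left _ ih

lemma pow_ge_linear2 {d : ℕ} (hd : 2 ≤ d) {e : ℕ} (he : 2 ≤ e) :
    (d - 1) * e + 2 ≤ d ^ e := by
  obtain ⟨c, rfl⟩ : ∃ c, d = c + 1 := ⟨d - 1, by omega⟩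
  have hc : 1 ≤ c := by omega
  simp only [Nat.add_sub_cancel]
  induction e with
  | zero => omega
  | succ e ih =>
    rcases Nat.lt_or_ge e 2 with h | h
    · interval_cases e
      · omega
      · have h2 : (c + 1) ^ (1 + 1) = (c + 1) * (c + 1) := by ring
        rw [h2]; nlinarith
    · have ih2 := ih (by omega)
      have h2 : (c + 1) ^ (e + 1) = (c + 1) * (c + 1) ^ e := by ring
      rw [h2]
      have h1 : 1 ≤ (c + 1) ^ e := Nat.one_le_pow _ _ (by omega)
      nlinarith

lemma multibrot_term_val (p d m n : ℕ) [Fact p.Prime] (hd : 2 ≤ d) (hm : 1 ≤ m)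
    (hpd : p ∣ d) (hpm : ¬ p ∣ m) (j : Fin n → ℕ) :
    (∏ k : Fin n,
        genBinom ((m : ℚ) / (d : ℚ) ^ (n - k.val)
          - ∑ l ∈ Finset.univ.filter (fun l : Fin n => l < k),
              (d : ℚ) ^ (k.val - l.val) * ((j l : ℕ) : ℚ)) (j k)) ≠ 0 ∧
    padicValRat p (∏ k : Fin n,
        genBinom ((m : ℚ) / (d : ℚ) ^ (n - k.val)
          - ∑ l ∈ Finset.univ.filter (fun l : Fin n => l < k),
              (d : ℚ) ^ (k.val - l.val) * ((j l : ℕ) : ℚ)) (j k))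
      = -((padicValNat p d : ℤ) * ((∑ k : Fin n, (n - k.val) * j k : ℕ) : ℤ)
          + ((∑ k : Fin n, padicValNat p (Nat.factorial (j k)) : ℕ) : ℤ)) := by
  have hdQ : (d : ℚ) ≠ 0 := Nat.cast_ne_zero.mpr (by omega)
  have hmQ : (m : ℚ) ≠ 0 := Nat.cast_ne_zero.mpr (by omega)
  have ha : 1 ≤ padicValNat p d := one_le_padicValNat_of_dvd (by omega) hpd
  have hterm : ∀ k : Fin n,
      genBinom ((m : ℚ) / (d : ℚ) ^ (n - k.val)
          - ∑ l ∈ Finset.univ.filter (fun l : Fin n => l < k),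
              (d : ℚ) ^ (k.val - l.val) * ((j l : ℕ) : ℚ)) (j k) ≠ 0 ∧
      padicValRat p (genBinom ((m : ℚ) / (d : ℚ) ^ (n - k.val)
          - ∑ l ∈ Finset.univ.filter (fun l : Fin n => l < k),
              (d : ℚ) ^ (k.val - l.val) * ((j l : ℕ) : ℚ)) (j k))
        = (j k : ℤ) * (-(((n - k.val : ℕ) : ℤ) * (padicValNat p d : ℤ)))
            - (padicValNat p (Nat.factorial (j k)) : ℤ) := by
    intro k
    have hcast : (∑ l ∈ Finset.univ.filter (fun l : Fin n => l < k),
        (d : ℚ) ^ (k.val - l.val) * ((j l : ℕ) : ℚ))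
        = (((∑ l ∈ Finset.univ.filter (fun l : Fin n => l < k),
            d ^ (k.val - l.val) * j l : ℕ)) : ℚ) := by
      push_cast; rfl
    rw [hcast]
    have hx0 : padicValRat p ((m : ℚ) / (d : ℚ) ^ (n - k.val))
        = -(((n - k.val : ℕ) : ℤ) * (padicValNat p d : ℤ)) := by
      rw [padicValRat.div hmQ (pow_ne_zero _ hdQ), padicValRat.pow (d : ℚ),
        padicValRat.of_nat, padicValRat.of_nat, padicValNat.eq_zero_of_not_dvd hpm]
      push_cast; ring
    have hxlt : padicValRat p ((m : ℚ) / (d : ℚ) ^ (n - k.val)) < 0 := by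
      rw [hx0]
      have h1 : 1 ≤ n - k.val := by have := k.2; omega
      have h2 : 1 ≤ (n - k.val) * padicValNat p d := Nat.one_le_iff_ne_zero.mpr
        (Nat.mul_ne_zero (by omega) (by omega))
      have h3 : (1 : ℤ) ≤ ((n - k.val : ℕ) : ℤ) * (padicValNat p d : ℤ) := by
        exact_mod_cast h2
      omega
    obtain ⟨hne, heq⟩ := padicValRat_sub_nat hxlt _
    obtain ⟨hg0, hgv⟩ := genBinom_ne_zero_and_val (by rw [heq]; exact hxlt) (j k)
    refine ⟨hg0, ?_⟩
    rw [hgv, heq, hx0]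
  constructor
  · exact Finset.prod_ne_zero_iff.mpr fun k _ => (hterm k).1
  · rw [padicValRat_finset_prod _ _ (fun k _ => (hterm k).1),
      Finset.sum_congr rfl fun k _ => (hterm k).2]
    have hA : (((∑ k : Fin n, (n - k.val) * j k : ℕ)) : ℤ)
        = ∑ k : Fin n, ((n - k.val : ℕ) : ℤ) * ((j k : ℕ) : ℤ) := by
      push_cast; rfl
    have hB : (((∑ k : Fin n, padicValNat p (Nat.factorial (j k)) : ℕ)) : ℤ)
        = ∑ k : Fin n, ((padicValNat p (Nat.factorial (j k)) : ℕ) : ℤ) :=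
      Nat.cast_sum _ _
    have h2 : (∑ k : Fin n, (j k : ℤ) * -(((n - k.val : ℕ) : ℤ) * (padicValNat p d : ℤ)))
        = -((padicValNat p d : ℤ) * ∑ k : Fin n, ((n - k.val : ℕ) : ℤ) * (j k : ℤ)) := by
      rw [Finset.mul_sum, ← Finset.sum_neg_distrib]
      exact Finset.sum_congr rfl fun k _ => by ring
    rw [hA, hB, Finset.sum_sub_distrib, h2]; ring

lemma multibrot_key_ineq (p d M n : ℕ) [Fact p.Prime] (a : ℕ) (ha : 1 ≤ a)
    (hd : 2 ≤ d) (hM : 1 ≤ M) (hn : 1 ≤ n) (j : Fin n → ℕ)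
    (hcon : ∑ k : Fin n, (d ^ (n - k.val) - 1) * j k = (d - 1) * M)
    (hne : j ≠ fun k : Fin n => if k = (⟨n - 1, by omega⟩ : Fin n) then M else 0) :
    a * (∑ k : Fin n, (n - k.val) * j k) + ∑ k : Fin n, padicValNat p (Nat.factorial (j k))
      < a * M + padicValNat p (Nat.factorial M) := by
  have hk0 : ∃ k0 : Fin n, j k0 ≠ 0 ∧ 2 ≤ n - k0.val := by
    by_contra hno
    push_neg at hno
    apply hne
    have hzero : ∀ k : Fin n, k ≠ (⟨n - 1, by omega⟩ : Fin n) → j k = 0 := by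
      intro k hk
      by_contra hjk
      have h2 := hno k hjk
      have hv : k.val < n := k.2
      exact hk (Fin.ext (by simp only [Fin.val_mk]; omega))
    funext k
    by_cases hk : k = (⟨n - 1, by omega⟩ : Fin n)
    · subst hk
      rw [if_pos rfl]
      rw [Finset.sum_eq_single (⟨n - 1, by omega⟩ : Fin n)] at hcon
      · simp only [Fin.val_mk] at hcon
        have he : n - (n - 1) = 1 := by omega
        rw [he, pow_one] at hcon
        exact Nat.eq_of_mul_eq_mul_left (by omega) hcon
      · intro b _ hb; rw [hzero b hb, mul_zero]
      · intro h; exact absurd (Finset.mem_univ _) h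
    · rw [if_neg hk]; exact hzero k hk
  obtain ⟨k0, hj0, he0⟩ := hk0
  have hpoint : ∀ k : Fin n, (d - 1) * ((n - k.val) * j k) ≤ (d ^ (n - k.val) - 1) * j k := by
    intro k
    rw [← mul_assoc]
    exact Nat.mul_le_mul_right _ (by have := pow_ge_linear (by omega : 1 ≤ d) (n - k.val); omega)
  have hstrict : (d - 1) * ((n - k0.val) * j k0) < (d ^ (n - k0.val) - 1) * j k0 := by
    rw [← mul_assoc]
    have hp2 := pow_ge_linear2 hd he0
    have hjpos : 0 < j k0 := Nat.pos_of_ne_zero hj0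
    exact mul_lt_mul_of_pos_right (by omega) hjpos
  have hS1 : (∑ k : Fin n, (n - k.val) * j k) < M := by
    have h1 : (d - 1) * (∑ k : Fin n, (n - k.val) * j k) < (d - 1) * M := by
      rw [Finset.mul_sum, ← hcon]
      exact Finset.sum_lt_sum (fun k _ => hpoint k) ⟨k0, Finset.mem_univ _, hstrict⟩
    exact Nat.lt_of_mul_lt_mul_left h1
  have hS3 : (∑ k : Fin n, j k) ≤ ∑ k : Fin n, (n - k.val) * j k :=
    Finset.sum_le_sum fun k _ => Nat.le_mul_of_pos_left _ (by have := k.2; omega)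
  have hS2 : (∑ k : Fin n, padicValNat p (Nat.factorial (j k)))
      ≤ padicValNat p (Nat.factorial M) := by
    rw [← padicValNat_finset_prod _ _ fun k _ => Nat.factorial_ne_zero _]
    exact padicValNat_le_of_dvd
      ((Nat.prod_factorial_dvd_factorial_sum _ _).trans
        (Nat.factorial_dvd_factorial (hS3.trans hS1.le)))
      (Nat.factorial_ne_zero M)
  have h5 : a * (∑ k : Fin n, (n - k.val) * j k) + a ≤ a * M := by
    calc a * (∑ k : Fin n, (n - k.val) * j k) + a
        = a * ((∑ k : Fin n, (n - k.val) * j k) + 1) := by ring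
      _ ≤ a * M := Nat.mul_le_mul_left _ hS1
  linarith

theorem multibrotB_ne_zero (d m : ℕ) (hd : 2 ≤ d) (hm : 1 ≤ m)
    (hdvd : (d - 1) ∣ (m + 1))
    (hex : ∃ p : ℕ, p.Prime ∧ p ∣ d ∧ ¬ p ∣ m) :
    ∀ n : ℕ, 1 ≤ n → m ≤ d ^ (n + 1) - 3 → multibrotB d m n ≠ 0 := by
  classical
  obtain ⟨p, hpp, hpd, hpm⟩ := hex
  haveI : Fact p.Prime := ⟨hpp⟩
  intro n hn _
  obtain ⟨M, hM⟩ := hdvd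
  have hmQ : (m : ℚ) ≠ 0 := Nat.cast_ne_zero.mpr (by omega)
  have hM1 : 1 ≤ M := by
    rcases Nat.eq_zero_or_pos M with rfl | h
    · simp at hM
    · exact h
  have hMm : M ≤ m + 1 := by
    calc M = 1 * M := (one_mul M).symm
      _ ≤ (d - 1) * M := Nat.mul_le_mul_right M (by omega)
      _ = m + 1 := hM.symm
  have ha : 1 ≤ padicValNat p d := one_le_padicValNat_of_dvd (by omega) hpd
  set jstar : Fin n → ℕ := fun k => if k = (⟨n - 1, by omega⟩ : Fin n) then M else 0
    with hjstar
  set s : Finset (Fin n → ℕ) := Fintype.piFinset fun _ => Finset.range (m + 2) with hs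
  have hS1star : (∑ k : Fin n, (n - k.val) * jstar k) = M := by
    rw [Finset.sum_eq_single (⟨n - 1, by omega⟩ : Fin n)]
    · simp only [hjstar, if_pos rfl, Fin.val_mk]
      have h1 : n - (n - 1) = 1 := by omega
      rw [h1, one_mul]
    · intro b _ hb; simp only [hjstar, if_neg hb, mul_zero]
    · intro h; exact absurd (Finset.mem_univ _) h
  have hS2star : (∑ k : Fin n, padicValNat p (Nat.factorial (jstar k)))
      = padicValNat p (Nat.factorial M) := by
    rw [Finset.sum_eq_single (⟨n - 1, by omega⟩ : Fin n)]
    · simp only [hjstar, if_pos rfl]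
    · intro b _ hb; simp only [hjstar, if_neg hb, Nat.factorial_zero, padicValNat.one]
    · intro h; exact absurd (Finset.mem_univ _) h
  have hconstar : (∑ k : Fin n, (d ^ (n - k.val) - 1) * jstar k) = m + 1 := by
    rw [Finset.sum_eq_single (⟨n - 1, by omega⟩ : Fin n)]
    · simp only [hjstar, if_pos rfl, Fin.val_mk]
      have h1 : n - (n - 1) = 1 := by omega
      rw [h1, pow_one]
      exact hM.symm
    · intro b _ hb; simp only [hjstar, if_neg hb, mul_zero]
    · intro h; exact absurd (Finset.mem_univ _) h
  have hjstar_mem : jstar ∈ s := by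
    rw [hs, Fintype.mem_piFinset]
    intro k
    rw [Finset.mem_range]
    simp only [hjstar]
    split
    · omega
    · omega
  rw [multibrotB]
  set G : (Fin n → ℕ) → ℚ := fun j =>
    if (∑ k : Fin n, (d ^ (n - k.val) - 1) * j k) = m + 1 then
      ∏ k : Fin n,
        genBinom ((m : ℚ) / (d : ℚ) ^ (n - k.val)
          - ∑ l ∈ Finset.univ.filter (fun l : Fin n => l < k),
              (d : ℚ) ^ (k.val - l.val) * ((j l : ℕ) : ℚ)) (j k)
    else 0 with hG
  have hsupp : Function.support G ⊆ ↑s := by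
    intro j hj
    rw [Function.mem_support] at hj
    by_cases hc : (∑ k : Fin n, (d ^ (n - k.val) - 1) * j k) = m + 1
    · rw [Finset.mem_coe, hs, Fintype.mem_piFinset]
      intro k
      rw [Finset.mem_range]
      have h1 : (d ^ (n - k.val) - 1) * j k ≤ m + 1 := by
        rw [← hc]
        exact Finset.single_le_sum (f := fun k : Fin n => (d ^ (n - k.val) - 1) * j k)
          (fun _ _ => Nat.zero_le _) (Finset.mem_univ k)
      have h2 : 2 ≤ d ^ (n - k.val) := by
        calc 2 ≤ d := hd
          _ = d ^ 1 := (pow_one d).symm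
          _ ≤ d ^ (n - k.val) := Nat.pow_le_pow_right (by omega) (by have := k.2; omega)
      have h3 : j k ≤ (d ^ (n - k.val) - 1) * j k := Nat.le_mul_of_pos_left _ (by omega)
      omega
    · exact absurd (by rw [hG]; exact if_neg hc) hj
  rw [finsum_eq_sum_of_support_subset G hsupp]
  apply mul_ne_zero (neg_ne_zero.mpr (one_div_ne_zero hmQ))
  apply sum_ne_zero_of_min (p := p) s G jstar hjstar_mem
  · rw [hG]
    simp only [if_pos hconstar]
    exact (multibrot_term_val p d m n hd hm hpd hpm jstar).1
  · intro j hj hjne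
    by_cases hc : (∑ k : Fin n, (d ^ (n - k.val) - 1) * j k) = m + 1
    · right
      rw [hG]
      simp only [if_pos hc, if_pos hconstar]
      obtain ⟨h0, hv⟩ := multibrot_term_val p d m n hd hm hpd hpm j
      obtain ⟨h0s, hvs⟩ := multibrot_term_val p d m n hd hm hpd hpm jstar
      rw [hS1star, hS2star] at hvs
      refine ⟨h0, ?_⟩
      rw [hv, hvs]
      have hkey := multibrot_key_ineq p d M n (padicValNat p d) ha hd hM1 hn j
        (by rw [hc]; exact hM) (by rw [hjstar] at hjne; exact hjne)
      have hkey' : ((padicValNat p d : ℤ) * ((∑ k : Fin n, (n - k.val) * j k : ℕ) : ℤ)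
          + ((∑ k : Fin n, padicValNat p (Nat.factorial (j k)) : ℕ) : ℤ))
          < ((padicValNat p d : ℤ) * (M : ℤ) + (padicValNat p (Nat.factorial M) : ℤ)) := by
        exact_mod_cast hkey
      exact neg_lt_neg hkey'
    · left
      rw [hG]
      exact if_neg hc
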